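/- Let n ≥ 1, C ≥ 0, and for i = 1, 2 let γᵢ : ℝ → ℝⁿ be curves and s_{i,−} ≤ s_{i,+} real numbers. Assume the parametrized tails agree: γ₁(s_{1,+} + u) = γ₂(s_{2,+} + u) for all u ≥ 0, and γ₁(s_{1,−} + u) = γ₂(s_{2,−} + u) for all u ≤ 0. Assume moreover that for i = 1, 2 there exists a real number 𝔗ᵢ such that (s, s') ↦ s − s' − √(C + ‖γᵢ(s)‖²) − √(C + ‖γᵢ(s')‖²) tends to 𝔗ᵢ along the product filter atTop ×ˢ atBot, and that 𝔗₁ = 𝔗₂. Then s_{1,+} − s_{1,−} = s_{2,+} − s_{2,−}. -/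

import Mathlib

open Filter

set_option maxHeartbeats 1000000 in
/-- Two curves whose parametrized incoming and outgoing tails agree (up to the parameter
shifts determined by their respective entry times `sᵢMinus` and exit times `sᵢPlus`), and
which have equal total sojourn times relative to `C`, spend the same parameter duration
between entry and exit: `s₁Plus − s₁Minus = s₂Plus − s₂Minus`. -/
theorem eq_duration_of_tails_eq_of_sojourn_eq {n : ℕ} (hn : 1 ≤ n)
    (C : ℝ) (hC : 0 ≤ C)
    (γ₁ γ₂ : ℝ → EuclideanSpace ℝ (Fin n))
    (s₁Minus s₁Plus s₂Minus s₂Plus : ℝ)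
    (h₁ : s₁Minus ≤ s₁Plus) (h₂ : s₂Minus ≤ s₂Plus)
    (htailPlus : ∀ u : ℝ, 0 ≤ u → γ₁ (s₁Plus + u) = γ₂ (s₂Plus + u))
    (htailMinus : ∀ u : ℝ, u ≤ 0 → γ₁ (s₁Minus + u) = γ₂ (s₂Minus + u))
    (𝔗₁ 𝔗₂ : ℝ)
    (hlim₁ : Tendsto
      (fun p : ℝ × ℝ =>
        p.1 - p.2 - Real.sqrt (C + ‖γ₁ p.1‖ ^ 2) - Real.sqrt (C + ‖γ₁ p.2‖ ^ 2))
      (atTop ×ˢ atBot) (nhds 𝔗₁))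
    (hlim₂ : Tendsto
      (fun p : ℝ × ℝ =>
        p.1 - p.2 - Real.sqrt (C + ‖γ₂ p.1‖ ^ 2) - Real.sqrt (C + ‖γ₂ p.2‖ ^ 2))
      (atTop ×ˢ atBot) (nhds 𝔗₂))
    (h𝔗 : 𝔗₁ = 𝔗₂) :
    s₁Plus - s₁Minus = s₂Plus - s₂Minus := by
  set a := s₂Plus - s₁Plus with ha
  set b := s₂Minus - s₁Minus with hb
  -- the shifted map tends to atTop ×ˢ atBot
  have hshift : Tendsto (fun p : ℝ × ℝ => ((p.1 + a, p.2 + b) : ℝ × ℝ))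
      (atTop ×ˢ atBot) (atTop ×ˢ atBot) :=
    Tendsto.prodMap (tendsto_atTop_add_const_right _ a tendsto_id)
      (tendsto_atBot_add_const_right _ b tendsto_id)
  have hcomp : Tendsto
      (fun p : ℝ × ℝ =>
        (p.1 + a) - (p.2 + b) - Real.sqrt (C + ‖γ₂ (p.1 + a)‖ ^ 2)
          - Real.sqrt (C + ‖γ₂ (p.2 + b)‖ ^ 2))
      (atTop ×ˢ atBot) (nhds 𝔗₂) := hlim₂.comp hshift
  have hcomp' : Tendsto
      (fun p : ℝ × ℝ =>
        p.1 - p.2 - Real.sqrt (C + ‖γ₂ (p.1 + a)‖ ^ 2)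
          - Real.sqrt (C + ‖γ₂ (p.2 + b)‖ ^ 2))
      (atTop ×ˢ atBot) (nhds (𝔗₂ - a + b)) := by
    have h := (hcomp.sub_const a).add_const b
    exact h.congr fun p => by ring
  -- eventually the two functions agree
  have heq : (fun p : ℝ × ℝ =>
        p.1 - p.2 - Real.sqrt (C + ‖γ₁ p.1‖ ^ 2) - Real.sqrt (C + ‖γ₁ p.2‖ ^ 2))
      =ᶠ[atTop ×ˢ atBot]
      (fun p : ℝ × ℝ =>
        p.1 - p.2 - Real.sqrt (C + ‖γ₂ (p.1 + a)‖ ^ 2)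
          - Real.sqrt (C + ‖γ₂ (p.2 + b)‖ ^ 2)) := by
    filter_upwards [prod_mem_prod (eventually_ge_atTop s₁Plus)
      (eventually_le_atBot s₁Minus)] with p hp
    obtain ⟨hp1, hp2⟩ := hp
    simp only [Set.mem_setOf_eq] at hp1 hp2
    have e1 : γ₁ p.1 = γ₂ (p.1 + a) := by
      have := htailPlus (p.1 - s₁Plus) (by linarith)
      simpa [ha, show s₁Plus + (p.1 - s₁Plus) = p.1 by ring,
        show s₂Plus + (p.1 - s₁Plus) = p.1 + (s₂Plus - s₁Plus) by ring] using this
    have e2 : γ₁ p.2 = γ₂ (p.2 + b) := by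
      have := htailMinus (p.2 - s₁Minus) (by linarith)
      simpa [hb, show s₁Minus + (p.2 - s₁Minus) = p.2 by ring,
        show s₂Minus + (p.2 - s₁Minus) = p.2 + (s₂Minus - s₁Minus) by ring] using this
    rw [e1, e2]
  have hlim₁' : Tendsto
      (fun p : ℝ × ℝ =>
        p.1 - p.2 - Real.sqrt (C + ‖γ₁ p.1‖ ^ 2) - Real.sqrt (C + ‖γ₁ p.2‖ ^ 2))
      (atTop ×ˢ atBot) (nhds (𝔗₂ - a + b)) := hcomp'.congr' heq.symm
  have : 𝔗₁ = 𝔗₂ - a + b := tendsto_nhds_unique hlim₁ hlim₁'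
  rw [h𝔗] at this
  simp only [ha, hb] at this
  linarith
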